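/- For every finite nonconstant Blaschke product B, the multiplication operator T_B on the Bergman space A_{−1} has a nontrivial closed hyperinvariant subspace: there exists a closed subspace M of A_{−1} with M ≠ {0} and M ≠ A_{−1} such that A(M) ⊆ M for every bounded linear operator A on A_{−1} satisfying A T_B = T_B A. -/

import Mathlib

open Complex Metric Filter

noncomputable section

/-- The open unit disc in `ℂ`. -/
def unitDisc : Set ℂ := Metric.ball (0 : ℂ) 1

/-- The `k`-th Taylor coefficient of `f` at the origin. -/
def tcoeff (f : ℂ → ℂ) (k : ℕ) : ℂ := iteratedDeriv k f 0 / (k.factorial : ℂ)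

/-- Membership in the weighted Bergman space `A_α`: `f` is analytic on the unit disc and
its Taylor coefficients satisfy `Σ |a_k|² (k+1)^α < ∞`. -/
def MemA (α : ℝ) (f : ℂ → ℂ) : Prop :=
  AnalyticOnNhd ℂ f unitDisc ∧
    Summable (fun k : ℕ => ‖tcoeff f k‖ ^ 2 * ((k : ℝ) + 1) ^ α)

/-- The `A_α` norm `(Σ |a_k|² (k+1)^α)^{1/2}`. -/
def normA (α : ℝ) (f : ℂ → ℂ) : ℝ :=
  Real.sqrt (∑' k : ℕ, ‖tcoeff f k‖ ^ 2 * ((k : ℝ) + 1) ^ α)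

/-- The `A_α` inner product `Σ a_k conj(b_k) (k+1)^α`. -/
def innerA (α : ℝ) (f g : ℂ → ℂ) : ℂ :=
  ∑' k : ℕ, tcoeff f k * (starRingEnd ℂ) (tcoeff g k) * ((((k : ℝ) + 1) ^ α : ℝ) : ℂ)

/-- `B` is a finite Blaschke product of degree `n` (as a function on the unit disc). -/
def IsFiniteBlaschke (n : ℕ) (B : ℂ → ℂ) : Prop :=
  ∃ (θ : ℝ) (a : Fin n → ℂ), (∀ i, a i ∈ unitDisc) ∧
    ∀ z ∈ unitDisc,
      B z = Complex.exp ((θ : ℂ) * Complex.I) *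
        ∏ i, (z - a i) / (1 - (starRingEnd ℂ) (a i) * z)

/-- Membership in the model space `K_B = H² ⊖ BH²` (here `H² = A_0`). -/
def MemKB (B u : ℂ → ℂ) : Prop :=
  MemA 0 u ∧ ∀ g : ℂ → ℂ, MemA 0 g → innerA 0 u (B * g) = 0

/-- `u 0, …, u (n-1)` is an algebraic basis of the model space `K_B`
(functions being identified when they agree on the unit disc). -/
def IsBasisKB (n : ℕ) (B : ℂ → ℂ) (u : Fin n → ℂ → ℂ) : Prop :=
  (∀ i, MemKB B (u i)) ∧
    (∀ c : Fin n → ℂ, Set.EqOn (∑ i, c i • u i) 0 unitDisc → c = 0) ∧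
    (∀ v, MemKB B v → ∃ c : Fin n → ℂ, Set.EqOn v (∑ i, c i • u i) unitDisc)

/-- Membership in the multiplier algebra `M_α` of `A_α`. -/
def MemMult (α : ℝ) (φ : ℂ → ℂ) : Prop :=
  AnalyticOnNhd ℂ φ unitDisc ∧ ∀ f, MemA α f → MemA α (φ * f)

/-- Membership in `H^∞`: bounded and analytic on the unit disc. -/
def MemHinf (φ : ℂ → ℂ) : Prop :=
  AnalyticOnNhd ℂ φ unitDisc ∧ ∃ C : ℝ, ∀ z ∈ unitDisc, ‖φ z‖ ≤ C

/-- `W` is (the action of) a bounded linear operator on `A_α`. -/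
def IsBddOpA (α : ℝ) (W : (ℂ → ℂ) →ₗ[ℂ] (ℂ → ℂ)) : Prop :=
  (∀ f, MemA α f → MemA α (W f)) ∧
    ∃ C : ℝ, ∀ f, MemA α f → normA α (W f) ≤ C * normA α f

/-- Multiplication by the independent variable `z`. -/
def mulz (f : ℂ → ℂ) : ℂ → ℂ := fun z => z * f z

/-- The monomial `z ^ k`. -/
def monZ (k : ℕ) : ℂ → ℂ := fun z => z ^ k

/-- The mean `(1/2π) ∫_0^{2π} |f(r e^{iθ})|^p dθ`. -/
def hpMean (p : ℝ) (f : ℂ → ℂ) (r : ℝ) : ℝ :=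
  (∫ θ in (0:ℝ)..(2 * Real.pi), ‖f ((r : ℂ) * Complex.exp ((θ : ℂ) * Complex.I))‖ ^ p) /
    (2 * Real.pi)

/-- Membership in the Hardy space `H^p`. -/
def MemHp (p : ℝ) (f : ℂ → ℂ) : Prop :=
  AnalyticOnNhd ℂ f unitDisc ∧ BddAbove (hpMean p f '' Set.Ico (0 : ℝ) 1)

/-- The `H^p` norm. -/
def normHp (p : ℝ) (f : ℂ → ℂ) : ℝ :=
  (sSup (hpMean p f '' Set.Ico (0 : ℝ) 1)) ^ (1 / p)

/-- `W` is (the action of) a bounded linear operator on `H^p`. -/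
def IsBddOpHp (p : ℝ) (W : (ℂ → ℂ) →ₗ[ℂ] (ℂ → ℂ)) : Prop :=
  (∀ f, MemHp p f → MemHp p (W f)) ∧
    ∃ C : ℝ, ∀ f, MemHp p f → normHp p (W f) ≤ C * normHp p f

/-- The Szegő reproducing kernel of `H²` at `a`. -/
def szego (a : ℂ) : ℂ → ℂ := fun z => 1 / (1 - (starRingEnd ℂ) a * z)

/-- The map `J(f_1, …, f_n) = Σ_j u_j · (f_j ∘ B)`. -/
def Jmap (n : ℕ) (u : Fin n → ℂ → ℂ) (B : ℂ → ℂ) (F : Fin n → ℂ → ℂ) : ℂ → ℂ :=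
  fun z => ∑ j, u j z * F j (B z)

/-- The `ℓ²` direct sum norm on `(A_α)^n`. -/
def tupleNormA (α : ℝ) (n : ℕ) (F : Fin n → ℂ → ℂ) : ℝ :=
  Real.sqrt (∑ j, (normA α (F j)) ^ 2)

/-- The Blaschke product `((z - a)/(1 - conj a · z))^N`. -/
def mobiusB (a : ℂ) (N : ℕ) : ℂ → ℂ :=
  fun z => ((z - a) / (1 - (starRingEnd ℂ) a * z)) ^ N

/-- The function `z / (1 - conj a · z)²` (a normalized Bergman kernel-type function). -/
def bergKernelFn (a : ℂ) : ℂ → ℂ := fun z => z / (1 - (starRingEnd ℂ) a * z) ^ 2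

section Aux

lemma isOpen_unitDisc : IsOpen unitDisc := Metric.isOpen_ball

lemma zero_mem_unitDisc : (0 : ℂ) ∈ unitDisc := by
  simp [unitDisc]

lemma tcoeff_congr {f g : ℂ → ℂ} (h : Set.EqOn f g unitDisc) (k : ℕ) :
    tcoeff f k = tcoeff g k := by
  unfold tcoeff
  rw [h.iteratedDeriv_of_isOpen isOpen_unitDisc k zero_mem_unitDisc]

lemma iteratedDeriv_eq_within (k : ℕ) (f : ℂ → ℂ) :
    iteratedDeriv k f 0 = iteratedDerivWithin k f unitDisc 0 := by
  rw [iteratedDeriv_eq_iteratedFDeriv, iteratedDerivWithin_eq_iteratedFDerivWithin,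
    iteratedFDerivWithin_of_isOpen k isOpen_unitDisc zero_mem_unitDisc]

lemma contDiffOn_of_analytic {f : ℂ → ℂ} (hf : AnalyticOnNhd ℂ f unitDisc) (k : ℕ) :
    ContDiffOn ℂ k f unitDisc :=
  hf.contDiffOn isOpen_unitDisc.uniqueDiffOn

lemma tcoeff_add {f g : ℂ → ℂ} (hf : AnalyticOnNhd ℂ f unitDisc)
    (hg : AnalyticOnNhd ℂ g unitDisc) (k : ℕ) :
    tcoeff (f + g) k = tcoeff f k + tcoeff g k := by
  unfold tcoeff
  rw [iteratedDeriv_eq_within k (f + g), iteratedDeriv_eq_within k f,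
    iteratedDeriv_eq_within k g,
    iteratedDerivWithin_add zero_mem_unitDisc isOpen_unitDisc.uniqueDiffOn
      ((contDiffOn_of_analytic hf k) 0 zero_mem_unitDisc)
      ((contDiffOn_of_analytic hg k) 0 zero_mem_unitDisc), add_div]

lemma tcoeff_neg (f : ℂ → ℂ) (k : ℕ) : tcoeff (-f) k = -tcoeff f k := by
  unfold tcoeff
  rw [show (-f) = fun x => -(f x) from rfl, iteratedDeriv_fun_neg, neg_div]

lemma tcoeff_sub {f g : ℂ → ℂ} (hf : AnalyticOnNhd ℂ f unitDisc)
    (hg : AnalyticOnNhd ℂ g unitDisc) (k : ℕ) :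
    tcoeff (f - g) k = tcoeff f k - tcoeff g k := by
  rw [sub_eq_add_neg, sub_eq_add_neg, tcoeff_add hf hg.neg k, tcoeff_neg]

lemma tcoeff_smul {f : ℂ → ℂ} (hf : AnalyticOnNhd ℂ f unitDisc) (c : ℂ) (k : ℕ) :
    tcoeff (c • f) k = c * tcoeff f k := by
  unfold tcoeff
  rw [iteratedDeriv_eq_within k (c • f), iteratedDeriv_eq_within k f,
    iteratedDerivWithin_const_smul zero_mem_unitDisc isOpen_unitDisc.uniqueDiffOn c
      ((contDiffOn_of_analytic hf k) 0 zero_mem_unitDisc), smul_eq_mul, mul_div_assoc]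

lemma iteratedDeriv_const_fun (k : ℕ) (c : ℂ) (x : ℂ) :
    iteratedDeriv k (fun _ : ℂ => c) x = if k = 0 then c else 0 := by
  induction k generalizing c x with
  | zero => simp
  | succ m ih =>
    rw [iteratedDeriv_succ', deriv_const']
    simp [ih]

lemma tcoeff_const (c : ℂ) (k : ℕ) : tcoeff (fun _ : ℂ => c) k = if k = 0 then c else 0 := by
  unfold tcoeff
  rw [iteratedDeriv_const_fun]
  rcases Nat.eq_zero_or_pos k with hk | hk
  · simp [hk]
  · simp [hk.ne']

lemma tcoeff_zero_fun (k : ℕ) : tcoeff (0 : ℂ → ℂ) k = 0 := by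
  have := tcoeff_const 0 k
  simpa [Pi.zero_def] using this

end Aux
section Aux2

lemma wt_pos (α : ℝ) (k : ℕ) : 0 < ((k : ℝ) + 1) ^ α :=
  Real.rpow_pos_of_pos (by positivity) α

lemma MemA.congr {α : ℝ} {f g : ℂ → ℂ} (hf : MemA α f) (h : Set.EqOn f g unitDisc) :
    MemA α g := by
  refine ⟨fun x hx => (hf.1 x hx).congr ?_, ?_⟩
  · filter_upwards [isOpen_unitDisc.mem_nhds hx] with y hy
    exact h hy
  · have : ∀ k, ‖tcoeff g k‖ ^ 2 * ((k : ℝ) + 1) ^ α = ‖tcoeff f k‖ ^ 2 * ((k : ℝ) + 1) ^ α := by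
      intro k; rw [tcoeff_congr h k]
    exact hf.2.congr fun k => (this k).symm

lemma normA_congr {α : ℝ} {f g : ℂ → ℂ} (h : Set.EqOn f g unitDisc) :
    normA α f = normA α g := by
  unfold normA
  congr 1
  exact tsum_congr fun k => by rw [tcoeff_congr h k]

lemma normA_nonneg (α : ℝ) (f : ℂ → ℂ) : 0 ≤ normA α f := Real.sqrt_nonneg _

lemma MemA.neg {α : ℝ} {f : ℂ → ℂ} (hf : MemA α f) : MemA α (-f) := by
  refine ⟨hf.1.neg, ?_⟩
  have : ∀ k, ‖tcoeff (-f) k‖ ^ 2 * ((k : ℝ) + 1) ^ α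
      = ‖tcoeff f k‖ ^ 2 * ((k : ℝ) + 1) ^ α := by
    intro k; rw [tcoeff_neg, norm_neg]
  exact hf.2.congr fun k => (this k).symm

lemma MemA.add {α : ℝ} {f g : ℂ → ℂ} (hf : MemA α f) (hg : MemA α g) : MemA α (f + g) := by
  refine ⟨hf.1.add hg.1, ?_⟩
  refine Summable.of_nonneg_of_le (fun k => by positivity) (fun k => ?_)
    ((hf.2.mul_left 2).add (hg.2.mul_left 2))
  have h1 : ‖tcoeff (f + g) k‖ ≤ ‖tcoeff f k‖ + ‖tcoeff g k‖ := by
    rw [tcoeff_add hf.1 hg.1]; exact norm_add_le _ _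
  have hw : 0 < ((k : ℝ) + 1) ^ α := wt_pos α k
  have h2 : ‖tcoeff (f + g) k‖ ^ 2 ≤ 2 * ‖tcoeff f k‖ ^ 2 + 2 * ‖tcoeff g k‖ ^ 2 := by
    nlinarith [norm_nonneg (tcoeff f k), norm_nonneg (tcoeff g k),
      norm_nonneg (tcoeff (f + g) k), sq_nonneg (‖tcoeff f k‖ - ‖tcoeff g k‖)]
  nlinarith [mul_le_mul_of_nonneg_right h2 hw.le]

lemma MemA.sub {α : ℝ} {f g : ℂ → ℂ} (hf : MemA α f) (hg : MemA α g) : MemA α (f - g) := by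
  rw [sub_eq_add_neg]; exact hf.add hg.neg

lemma MemA.smul {α : ℝ} {f : ℂ → ℂ} (hf : MemA α f) (c : ℂ) : MemA α (c • f) := by
  refine ⟨?_, ?_⟩
  · intro x hx
    have : AnalyticAt ℂ (fun z => c * f z) x := analyticAt_const.mul (hf.1 x hx)
    exact this
  · have : ∀ k, ‖tcoeff (c • f) k‖ ^ 2 * ((k : ℝ) + 1) ^ α
        = ‖c‖ ^ 2 * (‖tcoeff f k‖ ^ 2 * ((k : ℝ) + 1) ^ α) := by
      intro k; rw [tcoeff_smul hf.1, norm_mul]; ring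
    exact (hf.2.mul_left (‖c‖ ^ 2)).congr fun k => (this k).symm

lemma MemA.zero (α : ℝ) : MemA α (0 : ℂ → ℂ) := by
  refine ⟨?_, ?_⟩
  · intro x _; exact analyticAt_const
  · have : ∀ k, ‖tcoeff (0 : ℂ → ℂ) k‖ ^ 2 * ((k : ℝ) + 1) ^ α = 0 := by
      intro k; rw [tcoeff_zero_fun]; simp
    exact summable_zero.congr fun k => (this k).symm

lemma normA_zero_fun (α : ℝ) : normA α (0 : ℂ → ℂ) = 0 := by
  unfold normA
  have : ∀ k : ℕ, ‖tcoeff (0 : ℂ → ℂ) k‖ ^ 2 * ((k : ℝ) + 1) ^ α = 0 := by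
    intro k; rw [tcoeff_zero_fun]; simp
  rw [tsum_congr this, tsum_zero, Real.sqrt_zero]

lemma normA_smul {α : ℝ} {f : ℂ → ℂ} (hf : AnalyticOnNhd ℂ f unitDisc) (c : ℂ) :
    normA α (c • f) = ‖c‖ * normA α f := by
  unfold normA
  have : ∀ k, ‖tcoeff (c • f) k‖ ^ 2 * ((k : ℝ) + 1) ^ α
      = ‖c‖ ^ 2 * (‖tcoeff f k‖ ^ 2 * ((k : ℝ) + 1) ^ α) := by
    intro k; rw [tcoeff_smul hf, norm_mul]; ring
  rw [tsum_congr this, tsum_mul_left, Real.sqrt_mul (by positivity), Real.sqrt_sq (norm_nonneg c)]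

end Aux2
section Aux3

open scoped ENNReal

/-- Weighted coefficient sequence. -/
def seqA (α : ℝ) (f : ℂ → ℂ) : ℕ → ℂ :=
  fun k => (Real.sqrt (((k : ℝ) + 1) ^ α) : ℂ) * tcoeff f k

lemma norm_seqA_sq (α : ℝ) (f : ℂ → ℂ) (k : ℕ) :
    ‖seqA α f k‖ ^ 2 = ‖tcoeff f k‖ ^ 2 * ((k : ℝ) + 1) ^ α := by
  unfold seqA
  rw [norm_mul, Complex.norm_real, Real.norm_eq_abs,
    _root_.abs_of_nonneg (Real.sqrt_nonneg _), mul_pow, Real.sq_sqrt (wt_pos α k).le]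
  ring

lemma memℓp_seqA {α : ℝ} {f : ℂ → ℂ} (hf : MemA α f) : Memℓp (seqA α f) 2 := by
  apply memℓp_gen
  have h2 : (2 : ℝ≥0∞).toReal = 2 := by norm_num
  have : ∀ k : ℕ, ‖seqA α f k‖ ^ (2 : ℝ≥0∞).toReal
      = ‖tcoeff f k‖ ^ 2 * ((k : ℝ) + 1) ^ α := by
    intro k
    rw [h2, Real.rpow_two, norm_seqA_sq]
  exact hf.2.congr fun k => (this k).symm

/-- The element of `lp` associated to `f`. -/
def lpA (α : ℝ) (f : ℂ → ℂ) (hf : MemA α f) : lp (fun _ : ℕ => ℂ) 2 :=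
  ⟨seqA α f, memℓp_seqA hf⟩

lemma normA_eq_lp {α : ℝ} {f : ℂ → ℂ} (hf : MemA α f) : normA α f = ‖lpA α f hf‖ := by
  have h2 : (2 : ℝ≥0∞).toReal = 2 := by norm_num
  rw [lp.norm_eq_tsum_rpow (by norm_num : 0 < (2 : ℝ≥0∞).toReal) (lpA α f hf), h2]
  unfold normA
  rw [Real.sqrt_eq_rpow]
  congr 1
  refine tsum_congr fun k => ?_
  have hk : (lpA α f hf : ∀ _ : ℕ, ℂ) k = seqA α f k := rfl
  rw [hk, Real.rpow_two, norm_seqA_sq]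

lemma normA_add_le {α : ℝ} {f g : ℂ → ℂ} (hf : MemA α f) (hg : MemA α g) :
    normA α (f + g) ≤ normA α f + normA α g := by
  have hseq : seqA α (f + g) = seqA α f + seqA α g := by
    funext k
    simp only [seqA, Pi.add_apply, tcoeff_add hf.1 hg.1]
    ring
  have hlp : lpA α (f + g) (hf.add hg) = lpA α f hf + lpA α g hg := by
    apply Subtype.ext
    simp only [lpA]
    rw [hseq]
    rfl
  rw [normA_eq_lp (hf.add hg), normA_eq_lp hf, normA_eq_lp hg, hlp]
  exact norm_add_le _ _

end Aux3
section Aux4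

lemma hasSum_eval {f : ℂ → ℂ} (hf : DifferentiableOn ℂ f unitDisc) {z : ℂ}
    (hz : z ∈ unitDisc) : HasSum (fun k => tcoeff f k * z ^ k) (f z) := by
  have hball : DifferentiableOn ℂ f (Metric.ball (0 : ℂ) 1) := hf
  have hzb : z ∈ Metric.ball (0 : ℂ) 1 := hz
  have h := Complex.hasSum_taylorSeries_on_ball hball hzb
  have h2 : (fun k : ℕ => tcoeff f k * z ^ k)
      = fun k : ℕ => (k.factorial : ℂ)⁻¹ • (z - 0) ^ k • iteratedDeriv k f 0 := by
    funext k
    simp only [tcoeff, smul_eq_mul, sub_zero]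
    ring
  rw [h2]
  exact h

lemma memA_neg_one_of_ball {f : ℂ → ℂ} {r : ℝ} (hr : 1 < r)
    (hf : DifferentiableOn ℂ f (Metric.ball (0 : ℂ) r)) : MemA (-1) f := by
  set r1 : ℝ := (1 + r) / 2 with hr1def
  have hr11 : 1 < r1 := by rw [hr1def]; linarith
  have hr1r : r1 < r := by rw [hr1def]; linarith
  have hr10 : 0 < r1 := by linarith
  have hz1 : (r1 : ℂ) ∈ Metric.ball (0 : ℂ) r := by
    simp only [Metric.mem_ball, dist_zero_right, Complex.norm_real, Real.norm_eq_abs,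
      _root_.abs_of_nonneg hr10.le]
    exact hr1r
  have h := Complex.hasSum_taylorSeries_on_ball hf hz1
  have hsum : Summable fun k : ℕ => tcoeff f k * (r1 : ℂ) ^ k := by
    have h2 : (fun k : ℕ => tcoeff f k * (r1 : ℂ) ^ k)
        = fun k : ℕ => (k.factorial : ℂ)⁻¹ • ((r1 : ℂ) - 0) ^ k • iteratedDeriv k f 0 := by
      funext k
      simp only [tcoeff, smul_eq_mul, sub_zero]
      ring
    rw [h2]
    exact h.summable
  have hnorm : Summable fun k : ℕ => ‖tcoeff f k * (r1 : ℂ) ^ k‖ :=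
    summable_norm_iff.mpr hsum
  set C : ℝ := ∑' k : ℕ, ‖tcoeff f k * (r1 : ℂ) ^ k‖ with hCdef
  have hC0 : 0 ≤ C := tsum_nonneg fun k => norm_nonneg _
  have hCk : ∀ k : ℕ, ‖tcoeff f k‖ * r1 ^ k ≤ C := by
    intro k
    have := Summable.le_tsum hnorm k fun j _ => norm_nonneg _
    calc ‖tcoeff f k‖ * r1 ^ k = ‖tcoeff f k * (r1 : ℂ) ^ k‖ := by
          rw [norm_mul, norm_pow, Complex.norm_real, Real.norm_eq_abs,
            _root_.abs_of_nonneg hr10.le]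
      _ ≤ C := this
  constructor
  · exact (hf.analyticOnNhd Metric.isOpen_ball).mono
      (Metric.ball_subset_ball hr.le)
  · have hq0 : (0 : ℝ) ≤ (r1⁻¹) ^ 2 := by positivity
    have hq1 : (r1⁻¹) ^ 2 < 1 := by
      have : r1⁻¹ < 1 := by
        rw [inv_lt_one_iff₀]; right; exact hr11
      nlinarith [inv_nonneg.mpr hr10.le]
    refine Summable.of_nonneg_of_le (fun k => by positivity) (fun k => ?_)
      ((summable_geometric_of_lt_one hq0 hq1).mul_left (C ^ 2))
    have hb : ‖tcoeff f k‖ ≤ C * (r1⁻¹) ^ k := by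
      have hpow : (0 : ℝ) < r1 ^ k := by positivity
      rw [inv_pow, ← div_eq_mul_inv (C) ((r1 ^ k)), le_div_iff₀ hpow]
      exact hCk k
    have hW1 : ((k : ℝ) + 1) ^ (-1 : ℝ) ≤ 1 :=
      Real.rpow_le_one_of_one_le_of_nonpos (by linarith [Nat.cast_nonneg (α := ℝ) k])
        (by norm_num)
    have hW0 : (0 : ℝ) ≤ ((k : ℝ) + 1) ^ (-1 : ℝ) := (wt_pos _ k).le
    have hb2 : ‖tcoeff f k‖ ^ 2 ≤ C ^ 2 * ((r1⁻¹) ^ 2) ^ k := by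
      have := mul_self_le_mul_self (norm_nonneg (tcoeff f k)) hb
      calc ‖tcoeff f k‖ ^ 2 = ‖tcoeff f k‖ * ‖tcoeff f k‖ := sq (‖tcoeff f k‖) ▸ by ring
        _ ≤ (C * (r1⁻¹) ^ k) * (C * (r1⁻¹) ^ k) := this
        _ = C ^ 2 * ((r1⁻¹) ^ 2) ^ k := by rw [← pow_mul]; ring
    calc ‖tcoeff f k‖ ^ 2 * ((k : ℝ) + 1) ^ (-1 : ℝ)
        ≤ (C ^ 2 * ((r1⁻¹) ^ 2) ^ k) * 1 :=
          mul_le_mul hb2 hW1 hW0 (by positivity)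
      _ = C ^ 2 * ((r1⁻¹) ^ 2) ^ k := by ring

end Aux4

/-- For every finite nonconstant Blaschke product `B`, the operator `T_B`
on the Bergman space `A_{−1}` has a nontrivial closed hyperinvariant subspace `M`: `M` is a
closed subspace, `M ≠ {0}`, `M ≠ A_{−1}`, and `M` is invariant under every bounded operator
commuting with `T_B`. -/
theorem statement12 (n : ℕ) (hn : 1 ≤ n) (B : ℂ → ℂ) (hB : IsFiniteBlaschke n B) :
    ∃ M : Set (ℂ → ℂ),
      (∀ f ∈ M, MemA (-1) f) ∧
      (0 : ℂ → ℂ) ∈ M ∧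
      (∀ f ∈ M, ∀ g ∈ M, f + g ∈ M) ∧
      (∀ c : ℂ, ∀ f ∈ M, c • f ∈ M) ∧
      (∀ f, MemA (-1) f → (∀ ε > 0, ∃ g ∈ M, normA (-1) (f - g) < ε) → f ∈ M) ∧
      (∃ f ∈ M, ∃ z ∈ unitDisc, f z ≠ 0) ∧
      (∃ f, MemA (-1) f ∧ f ∉ M) ∧
      (∀ W : (ℂ → ℂ) →ₗ[ℂ] (ℂ → ℂ), IsBddOpA (-1) W →
        (∀ f, MemA (-1) f → Set.EqOn (W (B * f)) (B * W f) unitDisc) →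
        ∀ f ∈ M, W f ∈ M) := by
  classical
  obtain ⟨θ, a, ha, hBeq⟩ := hB
  have hnefin : Nonempty (Fin n) := ⟨⟨0, hn⟩⟩
  set i0 : Fin n := ⟨0, hn⟩ with hi0def
  set F : ℂ → ℂ := fun z => Complex.exp ((θ : ℂ) * Complex.I) *
      ∏ i, (z - a i) / (1 - (starRingEnd ℂ) (a i) * z) with hFdef
  have hEq : Set.EqOn B F unitDisc := fun z hz => hBeq z hz
  -- a uniform bound on the zeros
  have hne : (Finset.univ : Finset (Fin n)).Nonempty := Finset.univ_nonempty
  obtain ⟨m, hm, hm1, hm0⟩ : ∃ m : ℝ, (∀ i, ‖a i‖ ≤ m) ∧ m < 1 ∧ 0 ≤ m := by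
    refine ⟨Finset.univ.sup' hne (fun i => ‖a i‖), fun i => Finset.le_sup' (fun j => ‖a j‖) (Finset.mem_univ i), ?_, ?_⟩
    · rw [Finset.sup'_lt_iff]
      intro i _
      have := ha i
      simpa [unitDisc, Metric.mem_ball, dist_zero_right] using this
    · exact le_trans (norm_nonneg (a i0)) (Finset.le_sup' (fun j => ‖a j‖) (Finset.mem_univ i0))
  set r0 : ℝ := 2 / (1 + m) with hr0def
  have h1m : (0:ℝ) < 1 + m := by linarith
  have hr0 : 1 < r0 := by
    rw [hr0def, lt_div_iff₀ h1m]; linarith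
  have hmr0 : m * r0 < 1 := by
    rw [hr0def]
    rw [show m * (2 / (1+m)) = 2*m/(1+m) by ring, div_lt_one h1m]
    linarith
  -- denominators do not vanish on the ball of radius r0
  have hden : ∀ (i : Fin n) (z : ℂ), ‖z‖ < r0 → 1 - (starRingEnd ℂ) (a i) * z ≠ 0 := by
    intro i z hz hcontra
    have h1 : ‖(starRingEnd ℂ) (a i) * z‖ < 1 := by
      rw [norm_mul, RCLike.norm_conj]
      calc ‖a i‖ * ‖z‖ ≤ m * ‖z‖ := mul_le_mul_of_nonneg_right (hm i) (norm_nonneg z)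
        _ ≤ m * r0 := mul_le_mul_of_nonneg_left hz.le hm0
        _ < 1 := hmr0
    rw [sub_eq_zero] at hcontra
    rw [← hcontra] at h1
    simp at h1
  have hFdiff : DifferentiableOn ℂ F (Metric.ball (0:ℂ) r0) := by
    intro z hz
    have hz' : ‖z‖ < r0 := by simpa [Metric.mem_ball, dist_zero_right] using hz
    apply DifferentiableAt.differentiableWithinAt
    apply DifferentiableAt.const_mul
    apply DifferentiableAt.fun_finsetProd
    intro i _
    exact DifferentiableAt.div (differentiableAt_fun_id.sub (differentiableAt_const _))
      ((differentiableAt_const _).sub ((differentiableAt_const _).mul differentiableAt_fun_id))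
      (hden i z hz')
  have hMB : MemA (-1) B :=
    (memA_neg_one_of_ball hr0 hFdiff).congr (fun z hz => (hEq hz).symm)
  set a0 : ℂ := a i0 with ha0def
  have ha0 : a0 ∈ unitDisc := ha i0
  have hBa0 : B a0 = 0 := by
    rw [hBeq a0 ha0, Finset.prod_eq_zero (Finset.mem_univ i0) (by simp [ha0def]), mul_zero]
  -- a point of the disc where B does not vanish
  have hz0 : ∃ z ∈ unitDisc, B z ≠ 0 := by
    have hpt : ∀ j : ℕ, ((1 / ((j:ℝ) + 2) : ℝ) : ℂ) ∈ unitDisc := by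
      intro j
      have h2 : (0:ℝ) < (j:ℝ) + 2 := by positivity
      simp only [unitDisc, Metric.mem_ball, dist_zero_right, Complex.norm_real,
        Real.norm_eq_abs, _root_.abs_of_nonneg (by positivity : (0:ℝ) ≤ 1 / ((j:ℝ)+2))]
      rw [div_lt_one h2]
      linarith [Nat.cast_nonneg (α := ℝ) j]
    have hexz : ∃ z ∈ unitDisc, ∀ i, z ≠ a i := by
      by_contra hcon
      push_neg at hcon
      choose idx hidx using fun j : ℕ => hcon _ (hpt j)
      obtain ⟨j, j', hjj, hmap⟩ := Finite.exists_ne_map_eq_of_infinite idx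
      apply hjj
      have : ((1 / ((j:ℝ) + 2) : ℝ) : ℂ) = ((1 / ((j':ℝ) + 2) : ℝ) : ℂ) := by
        rw [hidx j, hidx j', hmap]
      have hre : (1 / ((j:ℝ) + 2) : ℝ) = 1 / ((j':ℝ) + 2) := by exact_mod_cast this
      have h2 : ((j:ℝ) + 2) = ((j':ℝ) + 2) := by
        rw [one_div, one_div, inv_inj] at hre
        exact hre
      have : (j:ℝ) = (j':ℝ) := by linarith
      exact_mod_cast this
    obtain ⟨z, hz, hzne⟩ := hexz
    refine ⟨z, hz, ?_⟩
    rw [hBeq z hz]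
    apply mul_ne_zero (Complex.exp_ne_zero _)
    rw [Finset.prod_ne_zero_iff]
    intro i _
    have hz1 : ‖z‖ < r0 := by
      have : ‖z‖ < 1 := by simpa [unitDisc, Metric.mem_ball, dist_zero_right] using hz
      linarith
    exact div_ne_zero (sub_ne_zero.mpr (hzne i)) (hden i z hz1)
  -- THE SUBSPACE
  set M : Set (ℂ → ℂ) := {f : ℂ → ℂ | MemA (-1) f ∧ ∀ ε : ℝ, 0 < ε →
      ∃ g : ℂ → ℂ, MemA (-1) g ∧ MemA (-1) (B * g) ∧ normA (-1) (f - B * g) < ε} with hMdef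
  have hone : MemA (-1) (fun _ : ℂ => (1:ℂ)) := by
    constructor
    · intro x _; exact analyticAt_const
    · apply summable_of_ne_finset_zero (s := ({0} : Finset ℕ))
      intro k hk
      have hk0 : k ≠ 0 := by simpa using hk
      rw [tcoeff_const, if_neg hk0]
      simp
  refine ⟨M, ?_, ?_, ?_, ?_, ?_, ?_, ?_, ?_⟩
  · exact fun f hf => hf.1
  · -- zero
    refine ⟨MemA.zero _, fun ε hε => ⟨0, MemA.zero _, ?_, ?_⟩⟩
    · rw [mul_zero]; exact MemA.zero _
    · rw [mul_zero, sub_zero, normA_zero_fun]; exact hε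
  · -- addition
    rintro f ⟨hf, hfa⟩ f' ⟨hf', hfa'⟩
    refine ⟨hf.add hf', fun ε hε => ?_⟩
    obtain ⟨g, hg, hBg, hn1⟩ := hfa (ε/2) (by linarith)
    obtain ⟨g', hg', hBg', hn2⟩ := hfa' (ε/2) (by linarith)
    refine ⟨g + g', hg.add hg', ?_, ?_⟩
    · rw [mul_add]; exact hBg.add hBg'
    · have heq : f + f' - B * (g + g') = (f - B * g) + (f' - B * g') := by
        rw [mul_add]; ring
      rw [heq]
      calc normA (-1) ((f - B * g) + (f' - B * g'))
          ≤ normA (-1) (f - B * g) + normA (-1) (f' - B * g') :=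
            normA_add_le (hf.sub hBg) (hf'.sub hBg')
        _ < ε/2 + ε/2 := add_lt_add hn1 hn2
        _ = ε := by ring
  · -- scalar multiplication
    rintro c f ⟨hf, hfa⟩
    refine ⟨hf.smul c, fun ε hε => ?_⟩
    obtain ⟨g, hg, hBg, hn1⟩ := hfa (ε / (‖c‖ + 1)) (by positivity)
    refine ⟨c • g, hg.smul c, ?_, ?_⟩
    · have : B * (c • g) = c • (B * g) := by
        funext z; simp [Pi.smul_apply, smul_eq_mul]; ring
      rw [this]; exact hBg.smul c
    · have heq : c • f - B * (c • g) = c • (f - B * g) := by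
        funext z; simp [Pi.smul_apply, smul_eq_mul]; ring
      rw [heq, normA_smul (hf.sub hBg).1 c]
      have hc1 : ‖c‖ < ‖c‖ + 1 := by linarith
      calc ‖c‖ * normA (-1) (f - B * g) ≤ ‖c‖ * (ε / (‖c‖ + 1)) := by
            apply mul_le_mul_of_nonneg_left hn1.le (norm_nonneg c)
        _ < (‖c‖ + 1) * (ε / (‖c‖ + 1)) := by
            apply mul_lt_mul_of_pos_right hc1 (by positivity)
        _ = ε := by field_simp
  · -- closedness
    rintro f hf happ
    refine ⟨hf, fun ε hε => ?_⟩
    obtain ⟨g0, hg0M, hng0⟩ := happ (ε/2) (by linarith)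
    obtain ⟨hg0mem, hg0app⟩ := hg0M
    obtain ⟨g, hg, hBg, hn1⟩ := hg0app (ε/2) (by linarith)
    refine ⟨g, hg, hBg, ?_⟩
    have heq : f - B * g = (f - g0) + (g0 - B * g) := by ring
    rw [heq]
    calc normA (-1) ((f - g0) + (g0 - B * g))
        ≤ normA (-1) (f - g0) + normA (-1) (g0 - B * g) :=
          normA_add_le (hf.sub hg0mem) (hg0mem.sub hBg)
      _ < ε/2 + ε/2 := add_lt_add hng0 hn1
      _ = ε := by ring
  · -- nontriviality
    obtain ⟨z, hz, hBz⟩ := hz0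
    refine ⟨B, ⟨hMB, fun ε hε => ?_⟩, z, hz, hBz⟩
    refine ⟨(fun _ => 1), hone, ?_, ?_⟩
    · have : B * (fun _ => (1:ℂ)) = B := by funext w; simp
      rw [this]; exact hMB
    · have : B * (fun _ => (1:ℂ)) = B := by funext w; simp
      rw [this, sub_self, normA_zero_fun]; exact hε
  · -- properness
    refine ⟨(fun _ => (1:ℂ)), hone, ?_⟩
    rintro ⟨-, happ⟩
    set q : ℝ := ‖a0‖ ^ 2 with hqdef
    have hq0 : (0:ℝ) ≤ q := sq_nonneg _
    have ha0n : ‖a0‖ < 1 := by simpa [unitDisc, Metric.mem_ball, dist_zero_right] using ha0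
    have hq1 : q < 1 := by nlinarith [norm_nonneg a0]
    have hSsumm : Summable (fun k : ℕ => ((k:ℝ)+1) * q ^ k) := by
      have h1 : Summable (fun k : ℕ => (k:ℝ) * q ^ k) := by
        have := summable_pow_mul_geometric_of_norm_lt_one 1
          (r := q) (by rwa [Real.norm_eq_abs, _root_.abs_of_nonneg hq0])
        simpa using this
      have h2 : Summable (fun k : ℕ => q ^ k) := summable_geometric_of_lt_one hq0 hq1
      exact (h1.add h2).congr (fun k => by ring)
    set S : ℝ := ∑' k : ℕ, ((k:ℝ)+1) * q ^ k with hSdef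
    have hS0 : 0 ≤ S := tsum_nonneg fun k => by positivity
    set t : ℝ := 2*S + 2 with htdef
    have ht2 : 2 ≤ t := by linarith
    have ht0 : (0:ℝ) < t := by linarith
    obtain ⟨g, hg, hBg, hnrm⟩ := happ (1/t) (by positivity)
    set h : ℂ → ℂ := (fun _ => (1:ℂ)) - B * g with hhdef
    have hMh : MemA (-1) h := hone.sub hBg
    have hha0 : h a0 = 1 := by
      have : h a0 = 1 - B a0 * g a0 := rfl
      rw [this, hBa0]; ring
    have hev : HasSum (fun k => tcoeff h k * a0 ^ k) (h a0) :=
      hasSum_eval hMh.1.differentiableOn ha0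
    have hbound : ∀ k : ℕ, ‖tcoeff h k * a0 ^ k‖ ≤
        t/2 * (‖tcoeff h k‖^2 * ((k:ℝ)+1)^(-1:ℝ)) + 1/(2*t) * (((k:ℝ)+1) * q ^ k) := by
      intro k
      have hw0 : (0:ℝ) < (k:ℝ)+1 := by positivity
      have hqk : q ^ k = (‖a0‖^k)^2 := by
        rw [hqdef, ← pow_mul, ← pow_mul']
      have key : ‖tcoeff h k‖ * ‖a0‖^k ≤
          t/2 * (‖tcoeff h k‖^2 * ((k:ℝ)+1)⁻¹) + 1/(2*t) * (((k:ℝ)+1) * (‖a0‖^k)^2) := by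
        rw [← sub_nonneg]
        have hcal : t/2 * (‖tcoeff h k‖^2 * ((k:ℝ)+1)⁻¹)
            + 1/(2*t) * (((k:ℝ)+1) * (‖a0‖^k)^2) - ‖tcoeff h k‖ * ‖a0‖^k
            = (t*‖tcoeff h k‖ - ((k:ℝ)+1)*‖a0‖^k)^2 * (2*t*((k:ℝ)+1))⁻¹ := by
          field_simp
          ring
        rw [hcal]
        positivity
      calc ‖tcoeff h k * a0 ^ k‖ = ‖tcoeff h k‖ * ‖a0‖^k := by rw [norm_mul, norm_pow]
        _ ≤ t/2 * (‖tcoeff h k‖^2 * ((k:ℝ)+1)⁻¹) + 1/(2*t) * (((k:ℝ)+1) * (‖a0‖^k)^2) := key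
        _ = t/2 * (‖tcoeff h k‖^2 * ((k:ℝ)+1)^(-1:ℝ)) + 1/(2*t) * (((k:ℝ)+1) * q ^ k) := by
            rw [Real.rpow_neg_one, hqk]
    have hRHS : Summable (fun k : ℕ =>
        t/2 * (‖tcoeff h k‖^2 * ((k:ℝ)+1)^(-1:ℝ)) + 1/(2*t) * (((k:ℝ)+1) * q ^ k)) :=
      (hMh.2.mul_left (t/2)).add (hSsumm.mul_left (1/(2*t)))
    have hLHS : Summable (fun k : ℕ => ‖tcoeff h k * a0 ^ k‖) :=
      Summable.of_nonneg_of_le (fun k => norm_nonneg _) hbound hRHS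
    set T : ℝ := ∑' k : ℕ, ‖tcoeff h k‖^2 * ((k:ℝ)+1)^(-1:ℝ) with hTdef
    have hT0 : 0 ≤ T := tsum_nonneg fun k => by positivity
    have hTnorm : normA (-1) h = Real.sqrt T := rfl
    have hTlt : T < (1/t)^2 := by
      have h1 : Real.sqrt T < 1/t := by rw [← hTnorm]; exact hnrm
      have h2 : Real.sqrt T ^ 2 < (1/t)^2 :=
        pow_lt_pow_left₀ h1 (Real.sqrt_nonneg _) (by norm_num)
      rwa [Real.sq_sqrt hT0] at h2
    have hchain : (1:ℝ) ≤ t/2 * T + 1/(2*t) * S := by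
      have e1 : (1:ℝ) = ‖h a0‖ := by rw [hha0]; simp
      have e2 : ‖h a0‖ ≤ ∑' k : ℕ, ‖tcoeff h k * a0 ^ k‖ := by
        rw [← hev.tsum_eq]
        exact norm_tsum_le_tsum_norm hLHS
      have e3 : ∑' k : ℕ, ‖tcoeff h k * a0 ^ k‖ ≤
          ∑' k : ℕ, (t/2 * (‖tcoeff h k‖^2 * ((k:ℝ)+1)^(-1:ℝ))
            + 1/(2*t) * (((k:ℝ)+1) * q ^ k)) :=
        Summable.tsum_le_tsum hbound hLHS hRHS
      have e4 : ∑' k : ℕ, (t/2 * (‖tcoeff h k‖^2 * ((k:ℝ)+1)^(-1:ℝ))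
            + 1/(2*t) * (((k:ℝ)+1) * q ^ k)) = t/2 * T + 1/(2*t) * S := by
        rw [Summable.tsum_add (hMh.2.mul_left (t/2)) (hSsumm.mul_left (1/(2*t))),
          tsum_mul_left, tsum_mul_left]
      rw [e4] at e3
      linarith
    have hfin1 : t/2 * T < t/2 * (1/t)^2 :=
      mul_lt_mul_of_pos_left hTlt (by positivity)
    have hfin2 : t/2 * (1/t)^2 = 1/(2*t) := by field_simp
    have hfin3 : 1/(2*t) + 1/(2*t) * S = 1/4 := by
      rw [htdef]; field_simp; ring
    linarith
  · -- hyperinvariance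
    rintro W ⟨hWmem, C, hWb⟩ hcomm f ⟨hf, hfa⟩
    refine ⟨hWmem f hf, fun ε hε => ?_⟩
    set C' : ℝ := max C 0 + 1 with hC'def
    have hC'0 : 0 < C' := by
      have := le_max_right C 0
      rw [hC'def]; linarith
    have hCC' : C ≤ C' := by
      have := le_max_left C 0
      rw [hC'def]; linarith
    obtain ⟨g, hg, hBg, hn1⟩ := hfa (ε / C') (by positivity)
    have hfBg : MemA (-1) (f - B * g) := hf.sub hBg
    have hWfBg : MemA (-1) (W (f - B * g)) := hWmem _ hfBg
    have hWBg : MemA (-1) (W (B * g)) := hWmem _ hBg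
    have hEqn : Set.EqOn (W f - B * W g) (W (f - B * g)) unitDisc := by
      intro z hz
      have h1 : W (B * g) z = (B * W g) z := hcomm g hg hz
      have h2 : W (f - B * g) = W f - W (B * g) := by rw [map_sub]
      rw [h2]
      simp only [Pi.sub_apply, Pi.mul_apply] at h1 ⊢
      rw [← h1]
    refine ⟨W g, hWmem g hg, ?_, ?_⟩
    · exact hWBg.congr (fun z hz => (hcomm g hg hz))
    · have hnormeq : normA (-1) (W f - B * W g) = normA (-1) (W (f - B * g)) :=
        normA_congr hEqn
      rw [hnormeq]
      calc normA (-1) (W (f - B * g)) ≤ C * normA (-1) (f - B * g) := hWb _ hfBg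
        _ ≤ C' * normA (-1) (f - B * g) :=
            mul_le_mul_of_nonneg_right hCC' (normA_nonneg _ _)
        _ < C' * (ε / C') := mul_lt_mul_of_pos_left hn1 hC'0
        _ = ε := by field_simp

end
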